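/- If two first-order terms s and t are unifiable and both s and t contain only function symbols from a designated set F of 'program function symbols', then any most general unifier of s and t binds variables only to terms containing function symbols from F. -/

import Mathlib

set_option autoImplicit false

namespace Flounder

/-- First-order terms over function symbols `F`, with natural-number variables. -/
inductive Trm (F : Type) : Type
  | var : ℕ → Trm F
  | app : F → List (Trm F) → Trm F

/-- Substitutions map variables to terms. -/
abbrev Subst (F : Type) := ℕ → Trm F

/-- Applying a substitution to a term. -/
def Trm.subst {F : Type} (θ : Subst F) : Trm F → Trm F
  | .var v => θ v
  | .app f ts => .app f (ts.attach.map (fun t => Trm.subst θ t.1))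
  decreasing_by
    have := List.sizeOf_lt_of_mem t.2
    simp only [Trm.app.sizeOf_spec] at *
    omega

/-- Composition of substitutions. -/
def Subst.comp {F : Type} (θ σ : Subst F) : Subst F := fun v => (θ v).subst σ

/-- The variable `v` occurs in the term. -/
inductive Trm.HasVar {F : Type} (v : ℕ) : Trm F → Prop
  | var : Trm.HasVar v (.var v)
  | app {f : F} {ts : List (Trm F)} {t : Trm F} :
      t ∈ ts → Trm.HasVar v t → Trm.HasVar v (.app f ts)

/-- The function symbol `f` occurs in the term. -/
inductive Trm.HasFunc {F : Type} (f : F) : Trm F → Prop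
  | head {ts : List (Trm F)} : Trm.HasFunc f (.app f ts)
  | arg {g : F} {ts : List (Trm F)} {t : Trm F} :
      t ∈ ts → Trm.HasFunc f t → Trm.HasFunc f (.app g ts)

def Trm.Ground {F : Type} (t : Trm F) : Prop := ∀ v, ¬ t.HasVar v

/-- All function symbols of the term belong to `Fp` (a "program term"). -/
def Trm.OnlyFuncs {F : Type} (Fp : Set F) (t : Trm F) : Prop := ∀ f, t.HasFunc f → f ∈ Fp

/-- The principal function symbol is extraneous (an "encoded variable"). -/
def EVarT {F : Type} (Fp : Set F) : Trm F → Prop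
  | .var _ => False
  | .app f _ => f ∉ Fp

/-- The term contains an extraneous function symbol (an "encoded non-ground term"). -/
def ENongroundT {F : Type} (Fp : Set F) (t : Trm F) : Prop := ∃ f, t.HasFunc f ∧ f ∉ Fp

/-- A renaming substitution: variables mapped injectively to variables. -/
def IsRenaming {F : Type} (ρ : Subst F) : Prop :=
  ∃ r : ℕ → ℕ, Function.Injective r ∧ ∀ v, ρ v = Trm.var (r v)

/-- Atoms: a predicate symbol applied to a list of terms. -/
structure Atom (P F : Type) where
  pred : P
  args : List (Trm F)

def Atom.subst {P F : Type} (θ : Subst F) (A : Atom P F) : Atom P F :=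
  ⟨A.pred, A.args.map (Trm.subst θ)⟩

def Atom.HasVar {P F : Type} (A : Atom P F) (v : ℕ) : Prop := ∃ t ∈ A.args, t.HasVar v
def Atom.Ground {P F : Type} (A : Atom P F) : Prop := ∀ v, ¬ A.HasVar v
def Atom.OnlyFuncs {P F : Type} (Fp : Set F) (A : Atom P F) : Prop :=
  ∀ t ∈ A.args, t.OnlyFuncs Fp

/-- `B` is an instance of `A`. -/
def Atom.Instance {P F : Type} (A B : Atom P F) : Prop := ∃ σ : Subst F, B = A.subst σ
def Atom.Variant {P F : Type} (A B : Atom P F) : Prop := A.Instance B ∧ B.Instance A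

def UnifiesA {P F : Type} (θ : Subst F) (A B : Atom P F) : Prop := A.subst θ = B.subst θ
/-- Most general unifier of two atoms: a unifier through which every unifier factors. -/
def IsMGUA {P F : Type} (θ : Subst F) (A B : Atom P F) : Prop :=
  UnifiesA θ A B ∧ ∀ η, UnifiesA η A B → ∃ σ, η = θ.comp σ

/-- Definite clauses. -/
structure Clause (P F : Type) where
  head : Atom P F
  body : List (Atom P F)

def Clause.subst {P F : Type} (θ : Subst F) (c : Clause P F) : Clause P F :=
  ⟨c.head.subst θ, c.body.map (Atom.subst θ)⟩
def Clause.HasVar {P F : Type} (c : Clause P F) (v : ℕ) : Prop :=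
  c.head.HasVar v ∨ ∃ B ∈ c.body, B.HasVar v
def Clause.Ground {P F : Type} (c : Clause P F) : Prop :=
  c.head.Ground ∧ ∀ B ∈ c.body, B.Ground
def Clause.OnlyFuncs {P F : Type} (Fp : Set F) (c : Clause P F) : Prop :=
  c.head.OnlyFuncs Fp ∧ ∀ B ∈ c.body, B.OnlyFuncs Fp

/-- Annotations record the list of (clause, body position) pairs by which an atom was
introduced; `none` marks the top-level goal ("clause 0"). -/
abbrev Ann (P F : Type) := List (Option (Clause P F) × ℕ)

/-- Annotated goals. -/
abbrev AGoal (P F : Type) := List (Atom P F × Ann P F)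

def initGoal {P F : Type} (G : List (Atom P F)) : AGoal P F :=
  (G.zipIdx.map Prod.swap).map fun p => (p.2, [(none, p.1 + 1)])

def AGoal.HasVar {P F : Type} (g : AGoal P F) (v : ℕ) : Prop := ∃ a ∈ g, a.1.HasVar v
def AGoal.inst {P F : Type} (θ : Subst F) (g : AGoal P F) : AGoal P F :=
  g.map fun a => (a.1.subst θ, a.2)

/-- The annotated body of a clause variant `c` (with original clause `c₀`), inserted
in place of a selected atom with annotation `ann`. -/
def annBody {P F : Type} (c c₀ : Clause P F) (ann : Ann P F) : AGoal P F :=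
  (c.body.zipIdx.map Prod.swap).map fun p => (p.2, (some c₀, p.1 + 1) :: ann)

/-- SLD(F) derivations of length `n` from goal `g0` with program `prog`, where only
atoms in the callable set `C` may be selected (SLD resolution: `C = Set.univ`).
`raw i` is the `i`-th goal with atoms as introduced (not yet instantiated), and
`sub i` is the composition of the mgus of the first `i` steps; the actual `i`-th
resolvent is `raw i` instantiated by `sub i`.  Clause variants are renamed apart. -/
structure Derivation (P F : Type) (prog : Set (Clause P F)) (C : Set (Atom P F))
    (g0 : AGoal P F) (n : ℕ) where
  raw : ℕ → AGoal P F
  sub : ℕ → Subst F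
  orig : ℕ → Clause P F
  cl : ℕ → Clause P F
  mgu : ℕ → Subst F
  selAtom : ℕ → Atom P F
  selAnn : ℕ → Ann P F
  hraw0 : raw 0 = g0
  hsub0 : sub 0 = fun v => Trm.var v
  horig : ∀ i < n, orig i ∈ prog
  hvariant : ∀ i < n, ∃ ρ, IsRenaming ρ ∧ cl i = (orig i).subst ρ
  hfresh : ∀ i < n, ∀ v, (cl i).HasVar v →
      (∀ j ≤ i, ¬ AGoal.HasVar (raw j) v) ∧ sub i v = Trm.var v ∧
        ∀ u, ¬ Trm.HasVar v (sub i u)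
  hstep : ∀ i < n, ∃ pre post, raw i = pre ++ ((selAtom i, selAnn i) :: post) ∧
      (selAtom i).subst (sub i) ∈ C ∧
      IsMGUA (mgu i) ((selAtom i).subst (sub i)) (cl i).head ∧
      raw (i + 1) = pre ++ annBody (cl i) (orig i) (selAnn i) ++ post
  hsubs : ∀ i < n, sub (i + 1) = (sub i).comp (mgu i)

namespace Derivation

variable {P F : Type} {prog : Set (Clause P F)} {C : Set (Atom P F)} {g0 : AGoal P F} {n : ℕ}

/-- The `i`-th resolvent. -/
def resolvent (D : Derivation P F prog C g0 n) (i : ℕ) : AGoal P F :=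
  AGoal.inst (D.sub i) (D.raw i)

/-- The atoms of the `i`-th resolvent. -/
def resAtoms (D : Derivation P F prog C g0 n) (i : ℕ) : List (Atom P F) :=
  (D.resolvent i).map Prod.fst

def rawAtoms (D : Derivation P F prog C g0 n) (i : ℕ) : List (Atom P F) :=
  (D.raw i).map Prod.fst

def Successful (D : Derivation P F prog C g0 n) : Prop := D.raw n = []

/-- Floundered: the last resolvent is nonempty and none of its atoms is callable. -/
def Floundered (D : Derivation P F prog C g0 n) : Prop :=
  D.raw n ≠ [] ∧ ∀ a ∈ D.resolvent n, a.1 ∉ C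

/-- The composed answer substitution of the derivation. -/
def answer (D : Derivation P F prog C g0 n) : Subst F := D.sub n

end Derivation

/-- Two derivations use the same clause selection: corresponding selected atoms
(equal annotations) are resolved with the same program clause. -/
def SameSelection {P F : Type} {prog prog' : Set (Clause P F)} {C C' : Set (Atom P F)}
    {g0 g0' : AGoal P F} {n n' : ℕ}
    (D : Derivation P F prog C g0 n) (D' : Derivation P F prog' C' g0' n') : Prop :=
  ∀ i < n, ∀ i' < n', D.selAnn i = D'.selAnn i' → D.orig i = D'.orig i'

/-- The answer substitution is a renaming on the variables of goal `G`. -/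
def RenamingOnGoal {P F : Type} (G : List (Atom P F)) (θ : Subst F) : Prop :=
  (∀ v, (∃ A ∈ G, A.HasVar v) → ∃ u, θ v = Trm.var u) ∧
  (∀ v w, (∃ A ∈ G, A.HasVar v) → (∃ A ∈ G, A.HasVar w) → v ≠ w → θ v ≠ θ w)

/-- Goal-level instance (one substitution applied throughout). -/
def GoalInst {P F : Type} (g h : List (Atom P F)) : Prop :=
  ∃ σ : Subst F, h = g.map (Atom.subst σ)

/-- `m` is a most general common instance of `g₁` and `g₂`. -/
def MGIGoal {P F : Type} (g₁ g₂ m : List (Atom P F)) : Prop :=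
  GoalInst g₁ m ∧ GoalInst g₂ m ∧
    ∀ m', GoalInst g₁ m' → GoalInst g₂ m' → GoalInst m m'

/-! ## Delay declarations -/

/-- Delay conditions over `n` argument positions, built from `var`, `nonground`,
conjunction and disjunction. -/
inductive DCond : ℕ → Type
  | var {n : ℕ} : Fin n → DCond n
  | nonground {n : ℕ} : Fin n → DCond n
  | conj {n : ℕ} : DCond n → DCond n → DCond n
  | disj {n : ℕ} : DCond n → DCond n → DCond n

/-- Concrete (procedural) truth of a delay condition. -/
def DCond.holds {F : Type} {n : ℕ} (args : Fin n → Trm F) : DCond n → Prop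
  | DCond.var i => ∃ v, args i = Trm.var v
  | DCond.nonground i => ¬ Trm.Ground (args i)
  | DCond.conj c d => DCond.holds args c ∧ DCond.holds args d
  | DCond.disj c d => DCond.holds args c ∨ DCond.holds args d

structure DelayDecl (P : Type) where
  pred : P
  arity : ℕ
  cond : DCond arity

/-- A program with delay declarations. -/
structure DProg (P F : Type) where
  prog : Set (Clause P F)
  delays : Set (DelayDecl P)

/-- An atom matches some delay declaration whose condition holds. -/
def Delayed {P F : Type} (dp : DProg P F) (A : Atom P F) : Prop :=
  ∃ d ∈ dp.delays, d.pred = A.pred ∧ ∃ h : A.args.length = d.arity,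
    DCond.holds (fun i => A.args.get (Fin.cast h.symm i)) d.cond

/-- The callable atom set induced by the delay declarations. -/
def Callable {P F : Type} (dp : DProg P F) : Set (Atom P F) := {A | ¬ Delayed dp A}

/-- A nonempty goal all of whose atoms are delayed. -/
def ImmFloundered {P F : Type} (dp : DProg P F) (G : List (Atom P F)) : Prop :=
  G ≠ [] ∧ ∀ A ∈ G, Delayed dp A

/-! ## The SF transformation -/

/-- Predicates of `SF(P)`: the original predicates plus `evar/1` and `enonground/1`. -/
inductive SPred (P : Type) : Type
  | orig : P → SPred P
  | evar : SPred P
  | enonground : SPred P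

def Atom.mapPred {P Q F : Type} (f : P → Q) (A : Atom P F) : Atom Q F := ⟨f A.pred, A.args⟩
def Clause.mapPred {P Q F : Type} (f : P → Q) (c : Clause P F) : Clause Q F :=
  ⟨c.head.mapPred f, c.body.map (Atom.mapPred f)⟩

/-- Disjunctive normal form of a delay condition: a list of conjunctions of
literals `(i, true)` (= var) and `(i, false)` (= nonground). -/
def DCond.dnf {n : ℕ} : DCond n → List (List (Fin n × Bool))
  | DCond.var i => [[(i, true)]]
  | DCond.nonground i => [[(i, false)]]
  | DCond.conj c d => (DCond.dnf c).flatMap (fun a => (DCond.dnf d).map (fun b => a ++ b))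
  | DCond.disj c d => DCond.dnf c ++ DCond.dnf d

/-- The delay clauses `A :- C'` added for the delay declarations (conditions
translated to `evar`/`enonground` calls, one clause per DNF disjunct). -/
def declClauses {P F : Type} (dp : DProg P F) : Set (Clause (SPred P) F) :=
  { c | ∃ d ∈ dp.delays, ∃ conj ∈ DCond.dnf d.cond,
      c = ⟨⟨SPred.orig d.pred, (List.range d.arity).map Trm.var⟩,
           conj.map (fun p =>
             ⟨if p.2 then SPred.evar else SPred.enonground, [Trm.var (p.1 : ℕ)]⟩)⟩ }

/-- The infinite fact set defining `evar/1`. -/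
def evarFacts (P : Type) {F : Type} (Fp : Set F) : Set (Clause (SPred P) F) :=
  { c | ∃ t : Trm F, t.Ground ∧ EVarT Fp t ∧ c = ⟨⟨SPred.evar, [t]⟩, []⟩ }

/-- The infinite fact set defining `enonground/1`. -/
def engFacts (P : Type) {F : Type} (Fp : Set F) : Set (Clause (SPred P) F) :=
  { c | ∃ t : Trm F, t.Ground ∧ ENongroundT Fp t ∧ c = ⟨⟨SPred.enonground, [t]⟩, []⟩ }

/-- All delay clauses: those for the declarations plus the `evar`/`enonground` facts. -/
def delayClausesAll {P F : Type} (Fp : Set F) (dp : DProg P F) : Set (Clause (SPred P) F) :=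
  declClauses dp ∪ evarFacts P Fp ∪ engFacts P Fp

/-- The transformed program `SF(P)`. -/
def SFprog {P F : Type} (Fp : Set F) (dp : DProg P F) : Set (Clause (SPred P) F) :=
  (Clause.mapPred SPred.orig '' dp.prog) ∪ delayClausesAll Fp dp

/-- The (ground) success set of a program: ground atoms with successful SLD
derivations. -/
def SS {P F : Type} (prog : Set (Clause P F)) : Set (Atom P F) :=
  { A | A.Ground ∧ ∃ n, ∃ D : Derivation P F prog Set.univ (initGoal [A]) n, D.Successful }

/-- The non-ground flounder set: program atoms with floundered derivations whose
floundered computed answer substitution is a renaming (empty). -/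
def NFS {P F : Type} (Fp : Set F) (prog : Set (Clause P F)) (C : Set (Atom P F)) :
    Set (Atom P F) :=
  { A | A.OnlyFuncs Fp ∧ ∃ n, ∃ D : Derivation P F prog C (initGoal [A]) n,
        D.Floundered ∧ RenamingOnGoal [A] (D.sub n) }

/-- `A` is a ground encoding of `B`: distinct variables of `B` are replaced by
distinct ground terms with extraneous principal function symbols. -/
def Encodes {P F : Type} (Fp : Set F) (B A : Atom P F) : Prop :=
  ∃ σ : Subst F, A = B.subst σ ∧
    (∀ v, B.HasVar v → (σ v).Ground ∧ EVarT Fp (σ v)) ∧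
    (∀ v w, B.HasVar v → B.HasVar w → v ≠ w → σ v ≠ σ w)

/-- The encoded flounder set. -/
def EFS {P F : Type} (Fp : Set F) (prog : Set (Clause P F)) (C : Set (Atom P F)) :
    Set (Atom P F) :=
  { A | ∃ B ∈ NFS Fp prog C, Encodes Fp B A }

/-- The computed answer binds each variable of `G` either to a variable or to a
ground term with extraneous principal function symbol, injectively. -/
def ExtrAnswer {P F : Type} (Fp : Set F) (G : List (Atom P F)) (θ : Subst F) : Prop :=
  (∀ v, (∃ A ∈ G, A.HasVar v) →
      (∃ u, θ v = Trm.var u) ∨ ((θ v).Ground ∧ EVarT Fp (θ v))) ∧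
  (∀ v w, (∃ A ∈ G, A.HasVar v) → (∃ A ∈ G, A.HasVar w) → v ≠ w → θ v ≠ θ w)

/-! ## Proof trees and the flagged immediate consequence operator -/

/-- `Proof prog A n`: the ground atom `A` has an SLD proof tree of height ≤ `n`. -/
inductive Proof {P F : Type} (prog : Set (Clause P F)) : Atom P F → ℕ → Prop
  | node {c : Clause P F} {γ : Subst F} {m : ℕ} :
      c ∈ prog → (Clause.subst γ c).Ground →
      (∀ B ∈ (Clause.subst γ c).body, Proof prog B m) →
      Proof prog (Clause.subst γ c).head (m + 1)
  | succ {A : Atom P F} {m : ℕ} : Proof prog A m → Proof prog A (m + 1)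

/-- `ProofD prog S A n`: proof tree of height ≤ `n` using at least one clause from `S`. -/
inductive ProofD {P F : Type} (prog S : Set (Clause P F)) : Atom P F → ℕ → Prop
  | here {c : Clause P F} {γ : Subst F} {m : ℕ} :
      c ∈ prog → c ∈ S → (Clause.subst γ c).Ground →
      (∀ B ∈ (Clause.subst γ c).body, Proof prog B m) →
      ProofD prog S (Clause.subst γ c).head (m + 1)
  | there {c : Clause P F} {γ : Subst F} {m : ℕ} {B : Atom P F} :
      c ∈ prog → (Clause.subst γ c).Ground →
      (∀ B' ∈ (Clause.subst γ c).body, Proof prog B' m) →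
      B ∈ (Clause.subst γ c).body → ProofD prog S B m →
      ProofD prog S (Clause.subst γ c).head (m + 1)
  | succ {A : Atom P F} {m : ℕ} : ProofD prog S A m → ProofD prog S A (m + 1)

/-- The standard immediate consequence operator. -/
def Tp {P F : Type} (prog : Set (Clause P F)) (I : Set (Atom P F)) : Set (Atom P F) :=
  { A | ∃ c ∈ prog, ∃ γ : Subst F, (Clause.subst γ c).Ground ∧
        (Clause.subst γ c).head = A ∧ ∀ B ∈ (Clause.subst γ c).body, B ∈ I }

/-- f-interpretations: a set of ground atoms, some flagged. -/
structure FInterp (P F : Type) where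
  atoms : Set (Atom P F)
  flagged : Set (Atom P F)

/-- The flagged immediate consequence operator `T^f_P`. -/
def Tf {P F : Type} (Fp : Set F) (dp : DProg P F) (I : FInterp (SPred P) F) :
    FInterp (SPred P) F where
  atoms := Tp (SFprog Fp dp) I.atoms
  flagged := { A | A ∈ Tp (SFprog Fp dp) I.atoms ∧
      (A.pred = SPred.evar ∨ A.pred = SPred.enonground ∨
       ∃ c ∈ SFprog Fp dp, ∃ γ : Subst F, (Clause.subst γ c).Ground ∧
         (Clause.subst γ c).head = A ∧
         (∀ B ∈ (Clause.subst γ c).body, B ∈ I.atoms) ∧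
         ∃ B ∈ (Clause.subst γ c).body, B ∈ I.flagged) }

/-- Iterates `T^f_P ↑ n`. -/
def TfIter {P F : Type} (Fp : Set F) (dp : DProg P F) : ℕ → FInterp (SPred P) F
  | 0 => ⟨∅, ∅⟩
  | m + 1 => Tf Fp dp (TfIter Fp dp m)

/-- `T^f_P ↑ ω`. -/
def TfOmega {P F : Type} (Fp : Set F) (dp : DProg P F) : FInterp (SPred P) F :=
  ⟨⋃ m, (TfIter Fp dp m).atoms, ⋃ m, (TfIter Fp dp m).flagged⟩


/-! ### Auxiliary material for STATEMENT 0 -/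

/-- A structural induction principle for `Trm`. -/
theorem Trm.my_ind {F : Type} {motive : Trm F → Prop}
    (hv : ∀ v, motive (.var v))
    (ha : ∀ f ts, (∀ t ∈ ts, motive t) → motive (.app f ts)) :
    ∀ t, motive t := by
  intro t
  induction t using Trm.subst.induct with
  | case1 v => exact hv v
  | case2 f ts ih =>
    exact ha f ts (fun t ht => ih ⟨t, ht⟩)

@[simp] theorem Trm.subst_var {F : Type} (θ : Subst F) (v : ℕ) :
    (Trm.var v).subst θ = θ v := by rw [Trm.subst]

theorem Trm.subst_app {F : Type} (θ : Subst F) (f : F) (ts : List (Trm F)) :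
    (Trm.app f ts).subst θ = .app f (ts.map (Trm.subst θ)) := by
  rw [Trm.subst]
  congr 1
  rw [List.attach_map_val]

open Classical in
/-- Erase extraneous symbols: replace any subterm with extraneous head by `var 0`. -/
noncomputable def erase {F : Type} (Fp : Set F) : Trm F → Trm F
  | .var v => .var v
  | .app f ts =>
      if f ∈ Fp then .app f (ts.attach.map (fun t => erase Fp t.1)) else .var 0
  decreasing_by
    have := List.sizeOf_lt_of_mem t.2
    simp only [Trm.app.sizeOf_spec] at *
    omega

open Classical in
theorem erase_app {F : Type} (Fp : Set F) (f : F) (ts : List (Trm F)) :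
    erase Fp (.app f ts) =
      if f ∈ Fp then Trm.app f (ts.map (erase Fp)) else .var 0 := by
  rw [erase]
  split
  · congr 1
    rw [List.attach_map_val]
  · rfl

/-- Substitution preserves function symbols. -/
theorem hasFunc_subst {F : Type} {t : Trm F} {f : F} (σ : Subst F)
    (h : t.HasFunc f) : (t.subst σ).HasFunc f := by
  induction h with
  | head =>
    rw [Trm.subst_app]
    exact Trm.HasFunc.head
  | arg hmem _ ih =>
    rw [Trm.subst_app]
    exact Trm.HasFunc.arg (List.mem_map_of_mem hmem) ih

/-- Erasure produces program terms. -/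
theorem erase_onlyFuncs {F : Type} (Fp : Set F) :
    ∀ t : Trm F, (erase Fp t).OnlyFuncs Fp := by
  intro t
  induction t using Trm.my_ind with
  | hv v =>
    intro f hf
    rw [erase] at hf
    cases hf
  | ha g ts ih =>
    intro f hf
    rw [erase_app] at hf
    split at hf
    · rename_i hg
      cases hf with
      | head => exact hg
      | arg hmem hfun =>
        obtain ⟨u, hu, rfl⟩ := List.mem_map.mp hmem
        exact ih u hu f hfun
    · cases hf

/-- Erasure commutes with substitution on program terms. -/
theorem subst_erase {F : Type} (Fp : Set F) (θ : Subst F) :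
    ∀ s : Trm F, s.OnlyFuncs Fp →
      s.subst (fun v => erase Fp (θ v)) = erase Fp (s.subst θ) := by
  intro s
  induction s using Trm.my_ind with
  | hv v => intro _; simp
  | ha f ts ih =>
    intro hs
    have hf : f ∈ Fp := hs f Trm.HasFunc.head
    rw [Trm.subst_app, Trm.subst_app, erase_app, if_pos hf]
    congr 1
    rw [List.map_map]
    apply List.map_congr_left
    intro t ht
    exact ih t ht (fun g hg => hs g (Trm.HasFunc.arg ht hg))

/-- an mgu of two program terms binds variables only to program terms. -/
theorem mgu_binds_only_program_terms {F : Type} (Fp : Set F) (s t : Trm F)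
    (hs : s.OnlyFuncs Fp) (ht : t.OnlyFuncs Fp) (theta : Subst F)
    (hunif : s.subst theta = t.subst theta)
    (hmgu : forall eta : Subst F, s.subst eta = t.subst eta ->
      exists sigma : Subst F, eta = theta.comp sigma) :
    forall v, (theta v).OnlyFuncs Fp := by
  -- the unifier obtained by erasing extraneous symbols from `theta`
  obtain ⟨σ, hσ⟩ := hmgu (fun v => erase Fp (theta v)) (by
    rw [subst_erase Fp theta s hs, subst_erase Fp theta t ht, hunif])
  intro v f hf
  have h1 : ((theta v).subst σ).HasFunc f := hasFunc_subst σ hf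
  have h2 : (theta v).subst σ = erase Fp (theta v) := by
    have := congrFun hσ v
    simpa [Subst.comp] using this.symm
  rw [h2] at h1
  exact erase_onlyFuncs Fp (theta v) f h1

end Flounder
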